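/- arXiv:2204.05411 — 2 statements merged into one kernel-verified Lean document; each statement's English description precedes it below -/
import Mathlib

section
/- (Lemma 1, M=2) Let F̃* ⊆ ℝ² be a finite mutually non-dominated set with |F̃*| ≥ 2, and for k ∈ {1,2} let ε_k be the maximum consecutive gap in the sorted k-th coordinates of F̃*. Then for every f in the non-dominated region of F̃* with f_k ≤ max of the k-th coordinates of F̃* for both k, there exists f* ∈ F̃* with f* ≤ f + ε componentwise, and f* is not unique (at least two such points exist). -/
/-- Maximal gap between consecutive elements of the increasing enumeration of a
finite set of reals. -/
noncomputable def maxGap (s : Finset ℝ) : ℝ :=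
  let L := s.sort (· ≤ ·)
  ((L.zip L.tail).map fun p => p.2 - p.1).foldr max 0

lemma le_foldr_max (l : List ℝ) (x : ℝ) (hx : x ∈ l) : x ≤ l.foldr max 0 := by
  induction l with
  | nil => simp at hx
  | cons a t ih =>
    rcases List.mem_cons.1 hx with h | h
    · simp [h, le_max_left]
    · exact le_trans (ih h) (le_max_right _ _)

lemma foldr_max_nonneg (l : List ℝ) : 0 ≤ l.foldr max 0 := by
  induction l with
  | nil => simp
  | cons a t ih => exact le_trans ih (le_max_right _ _)

lemma maxGap_nonneg (s : Finset ℝ) : 0 ≤ maxGap s := foldr_max_nonneg _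

lemma gap_le_maxGap (s : Finset ℝ) (u v : ℝ) (hu : u ∈ s) (hv : v ∈ s)
    (huv : u < v) (hb : ∀ w ∈ s, ¬(u < w ∧ w < v)) : v - u ≤ maxGap s := by
  classical
  set L := s.sort (· ≤ ·) with hL
  have hsort : L.SortedLT := s.sortedLT_sort
  have hmono : StrictMono L.get := hsort.strictMono_get
  have huL : u ∈ L := (Finset.mem_sort _).2 hu
  have hvL : v ∈ L := (Finset.mem_sort _).2 hv
  obtain ⟨i, hi⟩ := List.mem_iff_get.1 huL
  obtain ⟨j, hj⟩ := List.mem_iff_get.1 hvL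
  have hij : i < j := by
    by_contra h
    push_neg at h
    have := hmono.le_iff_le.2 h
    rw [hi, hj] at this
    exact absurd this (not_le.2 huv)
  have hi1 : (i : ℕ) + 1 < L.length := lt_of_le_of_lt (Nat.succ_le_of_lt hij) j.isLt
  set w := L.get ⟨(i : ℕ) + 1, hi1⟩ with hw
  have hws : w ∈ s := (Finset.mem_sort _).1 (List.get_mem L ⟨_, hi1⟩)
  have huw : u < w := by
    rw [← hi]; exact hmono (by simp [Fin.lt_def])
  have hwv : w ≤ v := by
    rw [← hj]
    exact (hmono.le_iff_le).2 (by simp [Fin.le_def]; exact Nat.succ_le_of_lt hij)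
  have hwv' : w = v := by
    rcases lt_or_eq_of_le hwv with h | h
    · exact absurd ⟨huw, h⟩ (hb w hws)
    · exact h
  -- (u, v) is a member of L.zip L.tail
  have hlen : (i : ℕ) < (L.zip L.tail).length := by
    rw [List.length_zip, List.length_tail]
    exact lt_min (lt_trans (by omega) hi1) (by omega)
  have hpair : (L.zip L.tail)[(i : ℕ)]'hlen = (u, v) := by
    rw [List.getElem_zip]
    refine Prod.ext ?_ ?_
    · simpa using hi
    · show L.tail[(i : ℕ)]'_ = v
      rw [List.getElem_tail]
      rw [← hwv', hw]
      simp
  have hmem : (u, v) ∈ L.zip L.tail := hpair ▸ List.getElem_mem hlen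
  have : v - u ∈ (L.zip L.tail).map fun p => p.2 - p.1 :=
    List.mem_map.2 ⟨(u, v), hmem, rfl⟩
  exact le_foldr_max _ _ this

/-- Lemma 1 (M = 2): for every point `f` of the non-dominated region of a finite
mutually non-dominated set `S`, with coordinates below the coordinate-wise maxima
of `S`, there exist at least two distinct points of `S` below `f + ε` componentwise,
where `ε` is the vector of maximal consecutive coordinate gaps. -/
theorem stmt_9 (S : Finset (ℝ × ℝ)) (hcard : 2 ≤ S.card) (hne : S.Nonempty)
    (hnd : ∀ f ∈ S, ∀ f' ∈ S, f ≠ f' → ¬(f'.1 ≤ f.1 ∧ f'.2 ≤ f.2))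
    (ε₁ ε₂ : ℝ)
    (hε₁ : ε₁ = maxGap (S.image Prod.fst))
    (hε₂ : ε₂ = maxGap (S.image Prod.snd))
    (f : ℝ × ℝ)
    (hfA : ¬∃ g ∈ S, f.1 ≤ g.1 ∧ f.2 ≤ g.2)
    (hf1 : f.1 ≤ (S.image Prod.fst).max' (hne.image Prod.fst))
    (hf2 : f.2 ≤ (S.image Prod.snd).max' (hne.image Prod.snd)) :
    ∃ a ∈ S, ∃ b ∈ S, a ≠ b ∧
      a.1 ≤ f.1 + ε₁ ∧ a.2 ≤ f.2 + ε₂ ∧ b.1 ≤ f.1 + ε₁ ∧ b.2 ≤ f.2 + ε₂ := by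
  classical
  push_neg at hfA
  have hε₁0 : 0 ≤ ε₁ := hε₁ ▸ maxGap_nonneg _
  have hε₂0 : 0 ≤ ε₂ := hε₂ ▸ maxGap_nonneg _
  -- there is a point with x-coordinate ≥ f.1
  obtain ⟨gx, hgxS, hgx⟩ := Finset.mem_image.1 ((S.image Prod.fst).max'_mem (hne.image Prod.fst))
  obtain ⟨gy, hgyS, hgy⟩ := Finset.mem_image.1 ((S.image Prod.snd).max'_mem (hne.image Prod.snd))
  have hgx1 : f.1 ≤ gx.1 := hgx ▸ hf1
  have hgy2 : f.2 ≤ gy.2 := hgy ▸ hf2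
  -- q : minimal x among points with x ≥ f.1
  have hSx : (S.filter (fun g => f.1 ≤ g.1)).Nonempty :=
    ⟨gx, Finset.mem_filter.2 ⟨hgxS, hgx1⟩⟩
  obtain ⟨q, hqmem, hqmin⟩ := Finset.exists_min_image _ (fun g => g.1) hSx
  obtain ⟨hqS, hq1⟩ := Finset.mem_filter.1 hqmem
  have hq2 : q.2 < f.2 := hfA q hqS hq1
  -- gy has x < f.1
  have hgy1 : gy.1 < f.1 := lt_of_not_ge fun h => absurd (hfA gy hgyS h) (not_lt.2 hgy2)
  -- p : maximal x among points with x < f.1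
  have hSx' : (S.filter (fun g => g.1 < f.1)).Nonempty :=
    ⟨gy, Finset.mem_filter.2 ⟨hgyS, hgy1⟩⟩
  obtain ⟨p, hpmem, hpmax⟩ := Finset.exists_max_image _ (fun g => g.1) hSx'
  obtain ⟨hpS, hp1⟩ := Finset.mem_filter.1 hpmem
  -- gap in x
  have hqx : q.1 ≤ f.1 + ε₁ := by
    have hgap : q.1 - p.1 ≤ maxGap (S.image Prod.fst) := by
      refine gap_le_maxGap _ _ _ (Finset.mem_image_of_mem _ hpS)
        (Finset.mem_image_of_mem _ hqS) (lt_of_lt_of_le hp1 hq1) ?_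
      rintro w hw ⟨hw1, hw2⟩
      obtain ⟨g, hgS, rfl⟩ := Finset.mem_image.1 hw
      rcases lt_or_ge g.1 f.1 with h | h
      · exact absurd (hpmax g (Finset.mem_filter.2 ⟨hgS, h⟩)) (not_le.2 hw1)
      · exact absurd (hqmin g (Finset.mem_filter.2 ⟨hgS, h⟩)) (not_le.2 hw2)
    rw [← hε₁] at hgap
    linarith
  -- q' : minimal y among points with y ≥ f.2
  have hSy : (S.filter (fun g => f.2 ≤ g.2)).Nonempty :=
    ⟨gy, Finset.mem_filter.2 ⟨hgyS, hgy2⟩⟩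
  obtain ⟨q', hq'mem, hq'min⟩ := Finset.exists_min_image _ (fun g => g.2) hSy
  obtain ⟨hq'S, hq'2⟩ := Finset.mem_filter.1 hq'mem
  have hq'1 : q'.1 < f.1 := lt_of_not_ge fun h => absurd (hfA q' hq'S h) (not_lt.2 hq'2)
  -- p' : maximal y among points with y < f.2
  have hSy' : (S.filter (fun g => g.2 < f.2)).Nonempty :=
    ⟨q, Finset.mem_filter.2 ⟨hqS, hq2⟩⟩
  obtain ⟨p', hp'mem, hp'max⟩ := Finset.exists_max_image _ (fun g => g.2) hSy'
  obtain ⟨hp'S, hp'2⟩ := Finset.mem_filter.1 hp'mem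
  have hq'y : q'.2 ≤ f.2 + ε₂ := by
    have hgap : q'.2 - p'.2 ≤ maxGap (S.image Prod.snd) := by
      refine gap_le_maxGap _ _ _ (Finset.mem_image_of_mem _ hp'S)
        (Finset.mem_image_of_mem _ hq'S) (lt_of_lt_of_le hp'2 hq'2) ?_
      rintro w hw ⟨hw1, hw2⟩
      obtain ⟨g, hgS, rfl⟩ := Finset.mem_image.1 hw
      rcases lt_or_ge g.2 f.2 with h | h
      · exact absurd (hp'max g (Finset.mem_filter.2 ⟨hgS, h⟩)) (not_le.2 hw1)
      · exact absurd (hq'min g (Finset.mem_filter.2 ⟨hgS, h⟩)) (not_le.2 hw2)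
    rw [← hε₂] at hgap
    linarith
  refine ⟨q', hq'S, q, hqS, ?_, le_of_lt (lt_of_lt_of_le hq'1 (by linarith)), hq'y,
    hqx, by linarith⟩
  intro h
  rw [h] at hq'1
  exact absurd hq1 (not_le.2 hq'1)
end

section
/- (Lemma 2, M=2) Let F be a (continuous) Pareto frontier in ℝ² and F̃ ⊆ F a finite subset containing, for each k, a point achieving max over F of the k-th coordinate, with |F̃| ≥ 2. Let ε_t be the vector of maximum consecutive coordinate gaps of F̃. Then the non-dominated region of the shifted set F̃ + ε_t is contained in the non-dominated region of F: Ã(F̃_{ε_t}) ⊆ A(F). -/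
noncomputable def gapFold (L : List ℝ) : ℝ :=
  ((L.zip L.tail).map fun p => p.2 - p.1).foldr max 0

lemma gapFold_nonneg (L : List ℝ) : 0 ≤ gapFold L := foldr_max_nonneg _

lemma maxGap_eq (s : Finset ℝ) : maxGap s = gapFold (s.sort (· ≤ ·)) := rfl

lemma gapFold_cons (a b : ℝ) (t : List ℝ) :
    gapFold (a :: b :: t) = max (b - a) (gapFold (b :: t)) := rfl

lemma gapFold_le_cons (a : ℝ) (rest : List ℝ) :
    gapFold rest ≤ gapFold (a :: rest) := by
  cases rest with
  | nil => simp [gapFold]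
  | cons b t => rw [gapFold_cons]; exact le_max_right _ _

lemma gap_cover (L : List ℝ) (hL : L.Pairwise (· ≤ ·)) (x : ℝ)
    (hup : ∃ b ∈ L, x ≤ b) (hlo : ∃ a ∈ L, a < x) :
    ∃ a ∈ L, a < x ∧ x ≤ a + gapFold L := by
  induction L with
  | nil => obtain ⟨a, ha, _⟩ := hlo; exact absurd ha List.not_mem_nil
  | cons a rest ih =>
    by_cases h : ∃ a' ∈ rest, a' < x
    · have hup' : ∃ b ∈ rest, x ≤ b := by
        obtain ⟨a', ha', hax⟩ := h
        obtain ⟨b, hb, hxb⟩ := hup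
        rcases List.mem_cons.mp hb with rfl | hb'
        · exact absurd (lt_of_le_of_lt ((List.pairwise_cons.mp hL).1 a' ha') hax)
            (not_lt.mpr hxb)
        · exact ⟨b, hb', hxb⟩
      obtain ⟨c, hc, hcx, hcg⟩ := ih (List.pairwise_cons.mp hL).2 hup' h
      exact ⟨c, List.mem_cons_of_mem _ hc, hcx,
        hcg.trans (by linarith [gapFold_le_cons a rest])⟩
    · push_neg at h
      obtain ⟨a0, ha0, ha0x⟩ := hlo
      have hax : a < x := by
        rcases List.mem_cons.mp ha0 with rfl | h'
        · exact ha0x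
        · exact absurd ha0x (not_lt.mpr (h _ h'))
      obtain ⟨b, hb, hxb⟩ := hup
      rcases List.mem_cons.mp hb with rfl | hb'
      · exact absurd hax (not_lt.mpr hxb)
      · cases rest with
        | nil => simp at hb'
        | cons h0 t =>
          refine ⟨a, List.mem_cons_self, hax, ?_⟩
          have hxh0 : x ≤ h0 := h h0 (List.mem_cons_self)
          have hgap : h0 - a ≤ gapFold (a :: h0 :: t) := by
            rw [gapFold_cons]; exact le_max_left _ _
          linarith

lemma maxGap_cover (s : Finset ℝ) (x : ℝ)
    (hup : ∃ b ∈ s, x ≤ b) (hlo : ∃ a ∈ s, a < x) :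
    ∃ a ∈ s, a < x ∧ x ≤ a + maxGap s := by
  rw [maxGap_eq]
  have := gap_cover (s.sort (· ≤ ·)) (Finset.pairwise_sort _ _) x
    (by obtain ⟨b, hb, hxb⟩ := hup; exact ⟨b, (Finset.mem_sort _).mpr hb, hxb⟩)
    (by obtain ⟨a, ha, hax⟩ := hlo; exact ⟨a, (Finset.mem_sort _).mpr ha, hax⟩)
  obtain ⟨a, ha, hax, hg⟩ := this
  exact ⟨a, (Finset.mem_sort _).mp ha, hax, hg⟩

/-- Lemma 2 (M = 2): if the finite approximation `F̃` of a Pareto frontier `F`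
contains the coordinate-wise maxima of `F`, then the non-dominated region of the
shifted set `F̃ + ε_t` is contained in the non-dominated region of `F`, where
`ε_t` is the vector of maximal consecutive coordinate gaps of `F̃`. -/
theorem stmt_10 (F : Set (ℝ × ℝ))
    (hndF : ∀ f ∈ F, ∀ f' ∈ F, f ≠ f' → ¬(f'.1 ≤ f.1 ∧ f'.2 ≤ f.2))
    (Ftil : Finset (ℝ × ℝ)) (hsub : ↑Ftil ⊆ F) (hcard : 2 ≤ Ftil.card)
    (hmax1 : ∃ f ∈ Ftil, ∀ g ∈ F, g.1 ≤ f.1)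
    (hmax2 : ∃ f ∈ Ftil, ∀ g ∈ F, g.2 ≤ f.2)
    (ε₁ ε₂ : ℝ)
    (hε₁ : ε₁ = maxGap (Ftil.image Prod.fst))
    (hε₂ : ε₂ = maxGap (Ftil.image Prod.snd)) :
    {f : ℝ × ℝ | ¬∃ s ∈ Ftil, f.1 ≤ s.1 + ε₁ ∧ f.2 ≤ s.2 + ε₂} ⊆
      {f : ℝ × ℝ | ¬∃ s ∈ F, f.1 ≤ s.1 ∧ f.2 ≤ s.2} := by
  have hε₁0 : 0 ≤ ε₁ := hε₁ ▸ maxGap_nonneg _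
  have hε₂0 : 0 ≤ ε₂ := hε₂ ▸ maxGap_nonneg _
  intro f hf
  simp only [Set.mem_setOf_eq] at hf ⊢
  intro ⟨s, hsF, hfs1, hfs2⟩
  apply hf
  by_cases h : ∃ a ∈ Ftil.image Prod.fst, a < s.1
  · -- covering case
    obtain ⟨t1, ht1F, ht1max⟩ := hmax1
    have hup : ∃ b ∈ Ftil.image Prod.fst, s.1 ≤ b :=
      ⟨t1.1, Finset.mem_image_of_mem _ ht1F, ht1max s hsF⟩
    obtain ⟨a, haF, hax, hcov⟩ := maxGap_cover _ _ hup h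
    obtain ⟨t, htF, hta⟩ := Finset.mem_image.mp haF
    have htne : s ≠ t := by
      intro hst; rw [← hst] at hta; rw [← hta] at hax; exact lt_irrefl _ hax
    have hnd := hndF s hsF t (hsub htF) htne
    have hts2 : s.2 ≤ t.2 := by
      by_contra hc
      push_neg at hc
      exact hnd ⟨hta ▸ hax.le, hc.le⟩
    exact ⟨t, htF, by rw [hta]; linarith,
      by linarith⟩
  · -- s.1 below all first coordinates: use the max-second-coord point
    push_neg at h
    obtain ⟨t2, ht2F, ht2max⟩ := hmax2
    have h1 : s.1 ≤ t2.1 := h t2.1 (Finset.mem_image_of_mem _ ht2F)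
    exact ⟨t2, ht2F, by linarith, by linarith [ht2max s hsF]⟩
end
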